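/- arXiv:1808.06712 — 2 statements merged into one kernel-verified Lean document; each statement's English description precedes it below -/
import Mathlib

section
/- For any family {X_s}_{s∈S} of topological spaces, subsets A_s ⊆ X_s, and natural number n ≥ 1, the n-fold iterated θ-closure of the product ∏_{s∈S} A_s in the product space equals the product of the n-fold iterated θ-closures: cl_θⁿ(∏_{s∈S} A_s) = ∏_{s∈S} cl_θⁿ(A_s). -/
open Set Topology Cardinal

universe u v

def thetaCl (X : Type u) [TopologicalSpace X] (A : Set X) : Set X :=
  {x | ∀ U : Set X, IsOpen U → x ∈ U → (closure U ∩ A).Nonempty}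

def thetaClN (X : Type u) [TopologicalSpace X] (n : ℕ) (A : Set X) : Set X :=
  (thetaCl X)^[n] A

def gammaCl (X : Type u) [TopologicalSpace X] (n : ℕ) (A : Set X) : Set X :=
  {x | ∀ U : Set X, IsOpen U → x ∈ U → (thetaClN X n U ∩ A).Nonempty}

def ThetaUrysohn (X : Type u) [TopologicalSpace X] (n : ℕ) : Prop :=
  ∀ x y : X, x ≠ y → ∃ U V : Set X, IsOpen U ∧ IsOpen V ∧ x ∈ U ∧ y ∈ V ∧
    thetaClN X n U ∩ thetaClN X n V = ∅

lemma thetaCl_pi {S : Type u} (X : S → Type v) [∀ s, TopologicalSpace (X s)]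
    (A : ∀ s, Set (X s)) :
    thetaCl (∀ s, X s) (Set.univ.pi A) =
      Set.univ.pi (fun s => thetaCl (X s) (A s)) := by
  classical
  ext x
  constructor
  · intro hx s _ U hU hxU
    obtain ⟨y, hyc, hyA⟩ := hx ((fun f => f s) ⁻¹' U)
      (hU.preimage (continuous_apply s)) hxU
    exact ⟨y s, (continuous_apply s).closure_preimage_subset U hyc, hyA s trivial⟩
  · intro hx U hU hxU
    obtain ⟨I, u, hu, hsub⟩ := isOpen_pi_iff.mp hU x hxU
    have h1 : ∀ s ∈ I, (closure (u s) ∩ A s).Nonempty := fun s hs =>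
      hx s trivial (u s) (hu s hs).1 (hu s hs).2
    have h2 : ∀ s, (A s).Nonempty := fun s => by
      simpa using hx s trivial Set.univ isOpen_univ trivial
    choose a ha using h1
    choose b hb using h2
    refine ⟨fun s => if h : s ∈ I then a s h else b s, ?_, ?_⟩
    · apply closure_mono hsub
      rw [closure_pi_set]
      intro s hs
      simp only [dif_pos (Finset.mem_coe.mp hs)]
      exact (ha s _).1
    · intro s _
      by_cases h : s ∈ I
      · simp only [dif_pos h]; exact (ha s h).2
      · simp only [dif_neg h]; exact hb s

lemma thetaClN_pi_aux {S : Type u} (X : S → Type v) [∀ s, TopologicalSpace (X s)]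
    (A : ∀ s, Set (X s)) (n : ℕ) :
    thetaClN (∀ s, X s) n (Set.univ.pi A) =
      Set.univ.pi (fun s => thetaClN (X s) n (A s)) := by
  induction n generalizing A with
  | zero => simp [thetaClN]
  | succ n ih =>
    have h1 : thetaClN (∀ s, X s) (n+1) (Set.univ.pi A)
        = thetaClN (∀ s, X s) n (thetaCl (∀ s, X s) (Set.univ.pi A)) := by
      simp [thetaClN, Function.iterate_succ_apply]
    rw [h1, thetaCl_pi, ih]
    ext y
    simp [thetaClN, Function.iterate_succ_apply]

theorem thetaClN_pi {S : Type u} (X : S → Type v) [∀ s, TopologicalSpace (X s)]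
    (A : ∀ s, Set (X s)) (n : ℕ) (hn : 1 ≤ n) :
    thetaClN (∀ s, X s) n (Set.univ.pi A) =
      Set.univ.pi (fun s => thetaClN (X s) n (A s)) :=
  thetaClN_pi_aux X A n
end

section
/- A topological space X is θⁿ-Urysohn if and only if the diagonal Δ_X = {(x,x) : x ∈ X} is n-γ-closed in X × X, i.e., cl_γⁿ(Δ_X) = Δ_X in the product space X × X. -/
open Set Topology Cardinal

universe u v

lemma subset_thetaCl {X : Type u} [TopologicalSpace X] (A : Set X) : A ⊆ thetaCl X A :=
  fun x hx U _ hxU => ⟨x, subset_closure hxU, hx⟩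

lemma subset_thetaClN {X : Type u} [TopologicalSpace X] (n : ℕ) (A : Set X) :
    A ⊆ thetaClN X n A := by
  induction n with
  | zero => exact subset_rfl
  | succ k ih =>
    intro x hx
    rw [thetaClN, Function.iterate_succ_apply']
    exact subset_thetaCl _ (ih hx)

lemma thetaCl_prod {X : Type u} {Y : Type v} [TopologicalSpace X] [TopologicalSpace Y]
    (A : Set X) (B : Set Y) :
    thetaCl (X × Y) (A ×ˢ B) = thetaCl X A ×ˢ thetaCl Y B := by
  ext p
  constructor
  · intro hp
    constructor
    · intro W hW hpW
      obtain ⟨q, hq1, hq2⟩ := hp (W ×ˢ (univ : Set Y)) (hW.prod isOpen_univ) ⟨hpW, trivial⟩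
      rw [closure_prod_eq] at hq1
      exact ⟨q.1, hq1.1, hq2.1⟩
    · intro W hW hpW
      obtain ⟨q, hq1, hq2⟩ := hp ((univ : Set X) ×ˢ W) (isOpen_univ.prod hW) ⟨trivial, hpW⟩
      rw [closure_prod_eq] at hq1
      exact ⟨q.2, hq1.2, hq2.2⟩
  · rintro ⟨h1, h2⟩ W hW hpW
    obtain ⟨U, V, hU, hV, hp1, hp2, hUVW⟩ := isOpen_prod_iff.mp hW p.1 p.2 hpW
    obtain ⟨a, haU, haA⟩ := h1 U hU hp1
    obtain ⟨b, hbV, hbB⟩ := h2 V hV hp2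
    refine ⟨(a, b), ?_, haA, hbB⟩
    have : (a, b) ∈ closure (U ×ˢ V) := by
      rw [closure_prod_eq]; exact ⟨haU, hbV⟩
    exact closure_mono hUVW this

lemma thetaClN_prod {X : Type u} {Y : Type v} [TopologicalSpace X] [TopologicalSpace Y]
    (n : ℕ) (A : Set X) (B : Set Y) :
    thetaClN (X × Y) n (A ×ˢ B) = thetaClN X n A ×ˢ thetaClN Y n B := by
  induction n with
  | zero => rfl
  | succ k ih =>
    rw [thetaClN, thetaClN, thetaClN, Function.iterate_succ_apply',
      Function.iterate_succ_apply', Function.iterate_succ_apply']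
    show thetaCl (X × Y) (thetaClN (X × Y) k (A ×ˢ B)) = _
    rw [ih, thetaCl_prod]
    rfl

theorem thetaUrysohn_iff_diagonal_gammaClosed (X : Type u) [TopologicalSpace X] (n : ℕ) :
    ThetaUrysohn X n ↔
      gammaCl (X × X) n {p : X × X | p.1 = p.2} = {p : X × X | p.1 = p.2} := by
  constructor
  · intro h
    apply Subset.antisymm
    · rintro ⟨x, y⟩ hp
      by_contra hxy
      obtain ⟨U, V, hU, hV, hxU, hyV, hdisj⟩ := h x y hxy
      obtain ⟨q, hq1, hq2⟩ := hp (U ×ˢ V) (hU.prod hV) ⟨hxU, hyV⟩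
      rw [thetaClN_prod] at hq1
      have : q.1 ∈ thetaClN X n U ∩ thetaClN X n V := ⟨hq1.1, hq2 ▸ hq1.2⟩
      rw [hdisj] at this
      exact this
    · intro p hp U hU hpU
      exact ⟨p, subset_thetaClN n U hpU, hp⟩
  · intro h x y hxy
    have : (x, y) ∉ gammaCl (X × X) n {p : X × X | p.1 = p.2} := by
      rw [h]; exact hxy
    simp only [gammaCl, mem_setOf_eq, not_forall] at this
    obtain ⟨W, hW, hxyW, hne⟩ := this
    obtain ⟨U, V, hU, hV, hxU, hyV, hUVW⟩ := isOpen_prod_iff.mp hW x y hxyW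
    refine ⟨U, V, hU, hV, hxU, hyV, ?_⟩
    rw [eq_empty_iff_forall_notMem]
    rintro z ⟨hz1, hz2⟩
    apply hne
    have hmem : (z, z) ∈ thetaClN (X × X) n (U ×ˢ V) := by
      rw [thetaClN_prod]; exact ⟨hz1, hz2⟩
    have mono : ∀ (m : ℕ) (A B : Set (X × X)), A ⊆ B → thetaClN (X × X) m A ⊆ thetaClN (X × X) m B := by
      intro m
      induction m with
      | zero => exact fun A B h => h
      | succ k ih =>
        intro A B hAB q hq
        rw [thetaClN, Function.iterate_succ_apply'] at hq ⊢
        intro S hS hqS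
        obtain ⟨r, hr1, hr2⟩ := hq S hS hqS
        exact ⟨r, hr1, ih A B hAB hr2⟩
    exact ⟨(z, z), mono n _ _ hUVW hmem, rfl⟩
end
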